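/- arXiv:2202.07262 — 4 statements merged into one kernel-verified Lean document; each statement's English description precedes it below -/
import Mathlib

section
/- Let F : ℝᵈ → ℝᵈ be μ-quasi-strongly monotone with respect to a solution x* (⟨F(x) - F(x*), x - x*⟩ ≥ μ‖x - x*‖² for all x) with F(x*) = 0 and μ > 0, and suppose the stochastic estimator g of F(x) satisfies E[g] = F(x) and E[‖g‖²] ≤ 2A·⟨F(x), x - x*⟩ + D for constants A > 0, D ≥ 0. Then for the update x⁺ = x - γ·g with 0 < γ ≤ 1/(2A), E[‖x⁺ - x*‖²] ≤ (1 - γμ)·‖x - x*‖² + γ²·D. -/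
open MeasureTheory RealInnerProductSpace

theorem stmt_6 {Ω : Type*} [MeasurableSpace Ω] (μ : Measure Ω) [IsProbabilityMeasure μ]
    {d : ℕ} (F : EuclideanSpace ℝ (Fin d) → EuclideanSpace ℝ (Fin d))
    (x xs : EuclideanSpace ℝ (Fin d)) (μc A D γ : ℝ)
    (hμc : 0 < μc) (hA : 0 < A) (hD : 0 ≤ D)
    (hqsm : ∀ y, ⟪F y - F xs, y - xs⟫ ≥ μc * ‖y - xs‖ ^ 2)
    (hFxs : F xs = 0)
    (g : Ω → EuclideanSpace ℝ (Fin d)) (hg : MemLp g 2 μ)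
    (hunbiased : ∫ ω, g ω ∂μ = F x)
    (hsecond : ∫ ω, ‖g ω‖ ^ 2 ∂μ ≤ 2 * A * ⟪F x, x - xs⟫ + D)
    (hγ0 : 0 < γ) (hγ : γ ≤ 1 / (2 * A)) :
    ∫ ω, ‖(x - γ • g ω) - xs‖ ^ 2 ∂μ ≤ (1 - γ * μc) * ‖x - xs‖ ^ 2 + γ ^ 2 * D := by
  have hgi : Integrable g μ := hg.integrable (by norm_num)
  have hsq : Integrable (fun ω => ‖g ω‖ ^ 2) μ := hg.norm.integrable_sq
  have hptw : ∀ ω, ‖(x - γ • g ω) - xs‖ ^ 2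
      = ‖x - xs‖ ^ 2 - 2 * γ * ⟪x - xs, g ω⟫ + γ ^ 2 * ‖g ω‖ ^ 2 := by
    intro ω
    have : (x - γ • g ω) - xs = (x - xs) - γ • g ω := by abel
    rw [this, norm_sub_sq_real, inner_smul_right, norm_smul]
    simp [abs_of_pos hγ0, mul_pow]
    ring
  have hintinner : Integrable (fun ω => ⟪x - xs, g ω⟫) μ := hgi.const_inner _
  have hEq : ∫ ω, ‖(x - γ • g ω) - xs‖ ^ 2 ∂μ
      = ‖x - xs‖ ^ 2 - 2 * γ * ⟪x - xs, F x⟫ + γ ^ 2 * ∫ ω, ‖g ω‖ ^ 2 ∂μ := by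
    simp_rw [hptw]
    have h1 : Integrable (fun ω => ‖x - xs‖ ^ 2 - 2 * γ * ⟪x - xs, g ω⟫) μ :=
      (integrable_const _).sub (hintinner.const_mul _)
    rw [integral_add h1 (hsq.const_mul _),
      integral_sub (integrable_const _) (hintinner.const_mul _), integral_const,
      integral_const_mul, integral_const_mul, integral_inner hgi, hunbiased]
    simp
  rw [hEq]
  have hFx : ⟪F x, x - xs⟫ ≥ μc * ‖x - xs‖ ^ 2 := by
    have := hqsm x; rwa [hFxs, sub_zero] at this
  have hsym : ⟪x - xs, F x⟫ = ⟪F x, x - xs⟫ := real_inner_comm _ _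
  rw [hsym]
  have hγA : γ * A ≤ 1 / 2 := by
    have := (le_div_iff₀ (by positivity : (0:ℝ) < 2 * A)).mp hγ
    linarith
  have hnn : (0:ℝ) ≤ ⟪F x, x - xs⟫ := le_trans (by positivity) hFx
  have hsq2 : γ ^ 2 * ∫ ω, ‖g ω‖ ^ 2 ∂μ ≤ γ ^ 2 * (2 * A * ⟪F x, x - xs⟫ + D) := by
    apply mul_le_mul_of_nonneg_left hsecond (by positivity)
  have k1 : 0 ≤ γ * (⟪F x, x - xs⟫ - μc * ‖x - xs‖ ^ 2) :=
    mul_nonneg hγ0.le (by linarith [hFx])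
  have k2 : 0 ≤ (1 - 2 * (γ * A)) * (γ * ⟪F x, x - xs⟫) :=
    mul_nonneg (by linarith) (mul_nonneg hγ0.le hnn)
  nlinarith [k1, k2]
end

section
/- Let A, B, C ≥ 0, ρ ∈ (0,1], μ > 0, and M = 2B/ρ. If 0 < γ ≤ min{1/μ, 1/(2(A + CM))}, and nonnegative sequences {a_k}, {s_k} satisfy the coupled recursion a_{k+1} + Mγ²·s_{k+1} ≤ a_k + Mγ²(1 - ρ + B/M)·s_k - 2γ(1 - γ(A + CM))·t_k + γ²(D₁ + M·D₂) with t_k ≥ μ·a_k and t_k ≥ 0, then the Lyapunov quantity V_k = a_k + Mγ²·s_k satisfies V_{k+1} ≤ (1 - min{γμ, ρ/2})·V_k + γ²(D₁ + M·D₂). -/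
theorem stmt_8 (A B C ρ μ γ D₁ D₂ : ℝ) (M : ℝ)
    (hA : 0 ≤ A) (hB : 0 ≤ B) (hC : 0 ≤ C) (hρ0 : 0 < ρ) (hρ1 : ρ ≤ 1)
    (hμ : 0 < μ) (hM : M = 2 * B / ρ)
    (hD₁ : 0 ≤ D₁) (hD₂ : 0 ≤ D₂)
    (hγ0 : 0 < γ) (hγ : γ ≤ min (1 / μ) (1 / (2 * (A + C * M))))
    (a s t : ℕ → ℝ) (ha : ∀ k, 0 ≤ a k) (hs : ∀ k, 0 ≤ s k)
    (ht0 : ∀ k, 0 ≤ t k) (ht : ∀ k, μ * a k ≤ t k)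
    (hrec : ∀ k, a (k + 1) + M * γ ^ 2 * s (k + 1) ≤
      a k + M * γ ^ 2 * (1 - ρ + B / M) * s k
        - 2 * γ * (1 - γ * (A + C * M)) * t k + γ ^ 2 * (D₁ + M * D₂)) :
    ∀ k, a (k + 1) + M * γ ^ 2 * s (k + 1) ≤
      (1 - min (γ * μ) (ρ / 2)) * (a k + M * γ ^ 2 * s k) + γ ^ 2 * (D₁ + M * D₂) := by
  intro k
  set c := min (γ * μ) (ρ / 2) with hc
  have hM0 : 0 ≤ M := by rw [hM]; positivity
  have hACM : 0 ≤ A + C * M := by positivity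
  have hγhalf : γ * (A + C * M) ≤ 1 / 2 := by
    rcases hACM.eq_or_lt with h | h
    · rw [← h]; norm_num
    · have h2 : γ ≤ 1 / (2 * (A + C * M)) := le_trans hγ (min_le_right _ _)
      calc γ * (A + C * M) ≤ (1 / (2 * (A + C * M))) * (A + C * M) := by
            exact mul_le_mul_of_nonneg_right h2 hACM
        _ = 1 / 2 := by field_simp
  have hcγμ : c ≤ γ * μ := min_le_left _ _
  have hcρ : c ≤ ρ / 2 := min_le_right _ _
  have h1 : c * a k ≤ 2 * γ * (1 - γ * (A + C * M)) * t k := by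
    have htk : γ * (μ * a k) ≤ γ * t k := mul_le_mul_of_nonneg_left (ht k) hγ0.le
    have hca : c * a k ≤ γ * μ * a k := mul_le_mul_of_nonneg_right hcγμ (ha k)
    nlinarith [ht0 k, mul_nonneg hγ0.le (ht0 k)]
  have h2 : M * γ ^ 2 * (1 - ρ + B / M) * s k ≤ (1 - c) * (M * γ ^ 2 * s k) := by
    rcases hB.eq_or_lt with hB0 | hB0
    · have : M = 0 := by rw [hM, ← hB0]; ring
      rw [this]; ring_nf; simp
    · have hMpos : 0 < M := by rw [hM]; exact div_pos (by linarith) hρ0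
      have hBM : B / M = ρ / 2 := by
        rw [hM]; field_simp
      rw [hBM]
      have : 1 - ρ + ρ / 2 ≤ 1 - c := by linarith
      have hnn : 0 ≤ M * γ ^ 2 * s k := mul_nonneg (by positivity) (hs k)
      nlinarith [hs k, sq_nonneg γ]
  have := hrec k
  have hexp : (1 - c) * (a k + M * γ ^ 2 * s k)
      = (1 - c) * a k + (1 - c) * (M * γ ^ 2 * s k) := by ring
  rw [hexp]
  nlinarith [ha k]
end

section
/- Consider vectors h_i, g_i, y_i ∈ ℝᵈ for i ∈ [n] and let an ω-unbiased compressor Q act independently on each Δ_i = g_i - h_i. Define h_i⁺ = h_i + α·Q(Δ_i) with 0 < α ≤ 1/(1+ω). If additionally E[g_i] = v_i (with g_i independent of Q), then E[‖h_i⁺ - y_i‖²] ≤ (1 - α)·‖h_i - y_i‖² + α·E[‖g_i - y_i‖²]. -/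
open MeasureTheory

theorem stmt_15 {Ω₁ Ω₂ : Type*} [MeasurableSpace Ω₁] [MeasurableSpace Ω₂]
    (μ₁ : Measure Ω₁) (μ₂ : Measure Ω₂)
    [IsProbabilityMeasure μ₁] [IsProbabilityMeasure μ₂]
    {d : ℕ} (Q : Ω₁ → EuclideanSpace ℝ (Fin d) → EuclideanSpace ℝ (Fin d))
    (w α : ℝ) (hw : 0 ≤ w) (hα0 : 0 < α) (hα : α ≤ 1 / (1 + w))
    (hQL2 : ∀ x, MemLp (fun ω₁ => Q ω₁ x) 2 μ₁)
    (hQunbiased : ∀ x, ∫ ω₁, Q ω₁ x ∂μ₁ = x)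
    (hQsecond : ∀ x, ∫ ω₁, ‖Q ω₁ x‖ ^ 2 ∂μ₁ ≤ (1 + w) * ‖x‖ ^ 2)
    (h y v : EuclideanSpace ℝ (Fin d))
    (g : Ω₂ → EuclideanSpace ℝ (Fin d)) (hgL2 : MemLp g 2 μ₂)
    (hgunbiased : ∫ ω₂, g ω₂ ∂μ₂ = v) :
    ∫ ω₂, ∫ ω₁, ‖(h + α • Q ω₁ (g ω₂ - h)) - y‖ ^ 2 ∂μ₁ ∂μ₂ ≤
      (1 - α) * ‖h - y‖ ^ 2 + α * ∫ ω₂, ‖g ω₂ - y‖ ^ 2 ∂μ₂ := by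
  have hw1 : (0:ℝ) < 1 + w := by linarith
  have hαw : α * (1 + w) ≤ 1 := by
    rw [div_eq_inv_mul, mul_one] at hα
    calc α * (1 + w) ≤ (1 + w)⁻¹ * (1 + w) := by
          exact mul_le_mul_of_nonneg_right hα hw1.le
      _ = 1 := inv_mul_cancel₀ hw1.ne'
  -- inner bound for a fixed x
  have key : ∀ x : EuclideanSpace ℝ (Fin d),
      ∫ ω₁, ‖(h + α • Q ω₁ x) - y‖ ^ 2 ∂μ₁ ≤
        ‖h - y‖ ^ 2 + 2 * α * (inner ℝ (h - y) x : ℝ) + α * ‖x‖ ^ 2 := by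
    intro x
    have hQint : Integrable (fun ω₁ => Q ω₁ x) μ₁ := (hQL2 x).integrable one_le_two
    have hQsq : Integrable (fun ω₁ => ‖Q ω₁ x‖ ^ 2) μ₁ :=
      (memLp_two_iff_integrable_sq_norm (hQL2 x).aestronglyMeasurable).mp (hQL2 x)
    have hinner : Integrable (fun ω₁ => (inner ℝ (h - y) (Q ω₁ x) : ℝ)) μ₁ :=
      hQint.const_inner _
    have expand : ∀ ω₁ : Ω₁, ‖(h + α • Q ω₁ x) - y‖ ^ 2 =
        ‖h - y‖ ^ 2 + 2 * α * (inner ℝ (h - y) (Q ω₁ x) : ℝ) + α ^ 2 * ‖Q ω₁ x‖ ^ 2 := by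
      intro ω₁
      have : (h + α • Q ω₁ x) - y = (h - y) + α • Q ω₁ x := by abel
      rw [this, norm_add_sq_real, inner_smul_right, norm_smul]
      simp [Real.norm_eq_abs, mul_pow, sq_abs]
      ring
    have heq : ∫ ω₁, ‖(h + α • Q ω₁ x) - y‖ ^ 2 ∂μ₁ =
        ‖h - y‖ ^ 2 + 2 * α * (inner ℝ (h - y) x : ℝ)
          + α ^ 2 * ∫ ω₁, ‖Q ω₁ x‖ ^ 2 ∂μ₁ := by
      simp_rw [expand]
      rw [integral_add (by exact (integrable_const _).add (hinner.const_mul _))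
            (hQsq.const_mul _),
          integral_add (integrable_const _) (hinner.const_mul _),
          integral_const, integral_const_mul, integral_const_mul,
          integral_inner hQint, hQunbiased]
      simp
    rw [heq]
    have h1 : α ^ 2 * ∫ ω₁, ‖Q ω₁ x‖ ^ 2 ∂μ₁ ≤ α ^ 2 * ((1 + w) * ‖x‖ ^ 2) :=
      mul_le_mul_of_nonneg_left (hQsecond x) (sq_nonneg α)
    have h2 : α ^ 2 * ((1 + w) * ‖x‖ ^ 2) ≤ α * ‖x‖ ^ 2 := by
      have : α * (α * (1 + w)) ≤ α * 1 := mul_le_mul_of_nonneg_left hαw hα0.le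
      nlinarith [sq_nonneg ‖x‖]
    linarith
  -- pointwise bound over ω₂
  have hpt : ∀ ω₂ : Ω₂,
      ∫ ω₁, ‖(h + α • Q ω₁ (g ω₂ - h)) - y‖ ^ 2 ∂μ₁ ≤
        (1 - α) * ‖h - y‖ ^ 2 + α * ‖g ω₂ - y‖ ^ 2 := by
    intro ω₂
    refine (key (g ω₂ - h)).trans_eq ?_
    have hgy : g ω₂ - y = (g ω₂ - h) + (h - y) := by abel
    have : ‖g ω₂ - y‖ ^ 2 = ‖g ω₂ - h‖ ^ 2
        + 2 * (inner ℝ (g ω₂ - h) (h - y) : ℝ) + ‖h - y‖ ^ 2 := by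
      rw [hgy, norm_add_sq_real]
    rw [this, real_inner_comm (g ω₂ - h) (h - y)]
    ring
  -- integrate over ω₂
  have hgysq : Integrable (fun ω₂ => ‖g ω₂ - y‖ ^ 2) μ₂ :=
    (memLp_two_iff_integrable_sq_norm
      ((hgL2.sub (memLp_const y)).aestronglyMeasurable)).mp (hgL2.sub (memLp_const y))
  have hRHSint : Integrable
      (fun ω₂ => (1 - α) * ‖h - y‖ ^ 2 + α * ‖g ω₂ - y‖ ^ 2) μ₂ :=
    (integrable_const _).add (hgysq.const_mul _)
  calc ∫ ω₂, ∫ ω₁, ‖(h + α • Q ω₁ (g ω₂ - h)) - y‖ ^ 2 ∂μ₁ ∂μ₂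
      ≤ ∫ ω₂, ((1 - α) * ‖h - y‖ ^ 2 + α * ‖g ω₂ - y‖ ^ 2) ∂μ₂ := by
        refine integral_mono_of_nonneg ?_ hRHSint (Filter.Eventually.of_forall hpt)
        exact Filter.Eventually.of_forall fun ω₂ =>
          integral_nonneg fun ω₁ => sq_nonneg _
    _ = (1 - α) * ‖h - y‖ ^ 2 + α * ∫ ω₂, ‖g ω₂ - y‖ ^ 2 ∂μ₂ := by
        rw [integral_add (integrable_const _) (hgysq.const_mul _), integral_const,
          integral_const_mul]
        simp
end

section
/- Let V^k = ∑_{i=1}^n ∑_{j=1}^m ‖F_{ij}(w_i^k) - F_{ij}(x*)‖², where each w_i^{k+1} equals x^k with probability p and w_i^k with probability 1 - p, independently across i. Suppose (1/(nm))·∑_{i,j} ‖F_{ij}(x^k) - F_{ij}(x*)‖² ≤ ℓ̃·⟨F(x^k) - F(x*), x^k - x*⟩. Then E_k[V^{k+1}] ≤ (1-p)·V^k + n·m·p·ℓ̃·⟨F(x^k) - F(x*), x^k - x*⟩. -/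
open MeasureTheory RealInnerProductSpace

lemma my_integral_ite {Ω : Type*} [MeasurableSpace Ω] (μ : Measure Ω) [IsProbabilityMeasure μ]
    (p a c : ℝ) (hp0 : 0 ≤ p) (b : Ω → Bool) (hs : MeasurableSet {ω | b ω = true})
    (hμ : μ {ω | b ω = true} = ENNReal.ofReal p) :
    ∫ ω, (if b ω then a else c) ∂μ = p * a + (1 - p) * c := by
  have heq : (fun ω => if b ω then a else c)
      = fun ω => c + ({ω | b ω = true}).indicator (fun _ => a - c) ω := by
    funext ω; by_cases h : b ω <;> simp [h, Set.indicator]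
  rw [heq, integral_add (integrable_const c) ((integrable_const (a - c)).indicator hs),
    integral_const, integral_indicator_const _ hs, measureReal_def, measureReal_def, hμ, ENNReal.toReal_ofReal hp0,
    measure_univ]
  simp; ring

theorem stmt_16 {Ω : Type*} [MeasurableSpace Ω] (μ : Measure Ω) [IsProbabilityMeasure μ]
    {d n m : ℕ}
    (F : Fin n → Fin m → EuclideanSpace ℝ (Fin d) → EuclideanSpace ℝ (Fin d))
    (Fbar : EuclideanSpace ℝ (Fin d) → EuclideanSpace ℝ (Fin d))
    (hFbar : ∀ y, Fbar y = (1 / ((n : ℝ) * m)) • ∑ i, ∑ j, F i j y)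
    (x xs : EuclideanSpace ℝ (Fin d)) (w : Fin n → EuclideanSpace ℝ (Fin d))
    (p lt : ℝ) (hp0 : 0 ≤ p) (hp1 : p ≤ 1) (hlt : 0 < lt)
    (b : Fin n → Ω → Bool) (hb : ∀ i, Measurable (b i))
    (hbp : ∀ i, μ {ω | b i ω = true} = ENNReal.ofReal p)
    (hcoco : (1 / ((n : ℝ) * m)) * ∑ i, ∑ j, ‖F i j x - F i j xs‖ ^ 2 ≤
      lt * ⟪Fbar x - Fbar xs, x - xs⟫) :
    ∫ ω, (∑ i, ∑ j, ‖F i j (if b i ω then x else w i) - F i j xs‖ ^ 2) ∂μ ≤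
      (1 - p) * (∑ i, ∑ j, ‖F i j (w i) - F i j xs‖ ^ 2)
        + (n : ℝ) * m * p * lt * ⟪Fbar x - Fbar xs, x - xs⟫ := by
  set A : Fin n → ℝ := fun i => ∑ j, ‖F i j x - F i j xs‖ ^ 2 with hA
  set B : Fin n → ℝ := fun i => ∑ j, ‖F i j (w i) - F i j xs‖ ^ 2 with hB
  have hsm : ∀ i, MeasurableSet {ω | b i ω = true} := fun i =>
    (hb i) (measurableSet_singleton true)
  have key : ∀ ω, (∑ i, ∑ j, ‖F i j (if b i ω then x else w i) - F i j xs‖ ^ 2)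
      = ∑ i, (if b i ω then A i else B i) := by
    intro ω
    refine Finset.sum_congr rfl fun i _ => ?_
    by_cases h : b i ω <;> simp [h, hA, hB]
  have hint : ∀ i : Fin n, Integrable (fun ω => if b i ω then A i else B i) μ := by
    intro i
    have heq : (fun ω => if b i ω then A i else B i)
        = fun ω => B i + ({ω | b i ω = true}).indicator (fun _ => A i - B i) ω := by
      funext ω; by_cases h : b i ω <;> simp [h, Set.indicator]
    rw [heq]
    exact (integrable_const _).add ((integrable_const _).indicator (hsm i))
  have h1 : ∫ ω, (∑ i, ∑ j, ‖F i j (if b i ω then x else w i) - F i j xs‖ ^ 2) ∂μ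
      = ∑ i, (p * A i + (1 - p) * B i) := by
    calc ∫ ω, (∑ i, ∑ j, ‖F i j (if b i ω then x else w i) - F i j xs‖ ^ 2) ∂μ
        = ∫ ω, (∑ i, if b i ω then A i else B i) ∂μ := by
          congr 1; funext ω; exact key ω
      _ = ∑ i, ∫ ω, (if b i ω then A i else B i) ∂μ := integral_finset_sum _ fun i _ => hint i
      _ = ∑ i, (p * A i + (1 - p) * B i) := by
          refine Finset.sum_congr rfl fun i _ => ?_
          exact my_integral_ite μ p (A i) (B i) hp0 (b i) (hsm i) (hbp i)
  rw [h1, Finset.sum_add_distrib, ← Finset.mul_sum, ← Finset.mul_sum]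
  have hSA : p * ∑ i, A i ≤ (n : ℝ) * m * p * lt * ⟪Fbar x - Fbar xs, x - xs⟫ := by
    rcases eq_or_ne ((n : ℝ) * m) 0 with h0 | h0
    · have hz : ∑ i, A i = 0 := by
        rcases mul_eq_zero.mp h0 with h | h
        · have hn : n = 0 := Nat.cast_eq_zero.mp h
          subst hn; simp
        · have hm : m = 0 := Nat.cast_eq_zero.mp h
          subst hm; simp [hA]
      rw [hz, h0]; simp
    · have hpos : (0 : ℝ) < (n : ℝ) * m := lt_of_le_of_ne (by positivity) (Ne.symm h0)
      have hS : ∑ i, A i ≤ (n : ℝ) * m * (lt * ⟪Fbar x - Fbar xs, x - xs⟫) := by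
        have := mul_le_mul_of_nonneg_left hcoco (le_of_lt hpos)
        rwa [one_div, mul_inv_cancel_left₀ h0] at this
      calc p * ∑ i, A i ≤ p * ((n : ℝ) * m * (lt * ⟪Fbar x - Fbar xs, x - xs⟫)) :=
            mul_le_mul_of_nonneg_left hS hp0
        _ = (n : ℝ) * m * p * lt * ⟪Fbar x - Fbar xs, x - xs⟫ := by ring
  linarith
end
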